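/- For every real constant κ there exist finite sets X, Y, Z, a probability distribution P on X×Y×Z, and a classical channel R from Y to Y×Z satisfying R(P_Y) = P_YZ, such that κ · D_max( P ‖ (id⊗R)(P_XY) ) < I(X:Z|Y)_P. -/

import Mathlib

noncomputable section

namespace CIT

/-- A probability distribution on a finite set. -/
def IsDist {X : Type*} [Fintype X] (p : X → ℝ) : Prop :=
  (∀ x, 0 ≤ p x) ∧ ∑ x, p x = 1

/-- Support inclusion `supp p ⊆ supp q`. -/
def suppLe {X : Type*} (p q : X → ℝ) : Prop := ∀ x, p x ≠ 0 → q x ≠ 0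

open Classical in
/-- Relative entropy (base 2), with `0·log 0 = 0`, `+∞` if the support
condition fails. -/
def relEnt {X : Type*} [Fintype X] (p q : X → ℝ) : EReal :=
  if suppLe p q then ((∑ x, p x * Real.logb 2 (p x / q x) : ℝ) : EReal) else ⊤

open Classical in
/-- Max-relative entropy `D_max(p‖q) = log max_{x ∈ supp p} p(x)/q(x)`,
`+∞` if the support condition fails. -/
def dMax {X : Type*} [Fintype X] (p q : X → ℝ) : EReal :=
  if suppLe p q then
    ((Real.logb 2 (sSup {r : ℝ | ∃ x, p x ≠ 0 ∧ r = p x / q x}) : ℝ) : EReal)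
  else ⊤

open Classical in
/-- Rényi relative entropy of order `α` (base 2), with `D_1 := D` and `+∞`
when `α > 1` and the support condition fails. -/
def renyi {X : Type*} [Fintype X] (α : ℝ) (p q : X → ℝ) : EReal :=
  if α = 1 then relEnt p q
  else if 1 < α ∧ ¬ suppLe p q then ⊤
  else (((α - 1)⁻¹ * Real.logb 2 (∑ x, p x ^ α * q x ^ (1 - α)) : ℝ) : EReal)

/-- The `XY`-marginal of a tripartite distribution. -/
def margXY {X Y Z : Type*} [Fintype Z] (P : X × Y × Z → ℝ) : X × Y → ℝ :=
  fun t => ∑ z, P (t.1, t.2, z)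

/-- The `YZ`-marginal of a tripartite distribution. -/
def margYZ {X Y Z : Type*} [Fintype X] (P : X × Y × Z → ℝ) : Y × Z → ℝ :=
  fun t => ∑ x, P (x, t.1, t.2)

/-- The `Y`-marginal of a tripartite distribution. -/
def margY {X Y Z : Type*} [Fintype X] [Fintype Z] (P : X × Y × Z → ℝ) : Y → ℝ :=
  fun y => ∑ x, ∑ z, P (x, y, z)

/-- Conditional mutual information
`I(X:Z|Y)_P = Σ P(x,y,z) log( P(x,y,z)·P_Y(y) / (P_XY(x,y)·P_YZ(y,z)) )`. -/
def cmi {X Y Z : Type*} [Fintype X] [Fintype Y] [Fintype Z] (P : X × Y × Z → ℝ) : ℝ :=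
  ∑ s : X × Y × Z,
    P s * Real.logb 2 (P s * margY P s.2.1 / (margXY P (s.1, s.2.1) * margYZ P (s.2.1, s.2.2)))

/-- A classical channel from `Y` to `W`: a family of conditional distributions. -/
def IsChannel {Y W : Type*} [Fintype W] (R : Y → W → ℝ) : Prop :=
  ∀ y, (∀ w, 0 ≤ R y w) ∧ ∑ w, R y w = 1

/-- Action `(id ⊗ R)` of a channel `R : Y → W` on a joint distribution on `X × Y`. -/
def applyChan {X Y W : Type*} [Fintype Y] (R : Y → W → ℝ) (P : X × Y → ℝ) : X × W → ℝ :=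
  fun t => ∑ y, P (t.1, y) * R y t.2

/-- Action of a channel `R : Y → W` on a distribution on `Y`. -/
def chanOnDist {Y W : Type*} [Fintype Y] (R : Y → W → ℝ) (q : Y → ℝ) : W → ℝ :=
  fun w => ∑ y, q y * R y w

/-- Marginal channel `R_{Y→Y}(y'|y) = Σ_{z'} R(y',z'|y)`. -/
def margChan {Y Y' Z' : Type*} [Fintype Z'] (R : Y → Y' × Z' → ℝ) : Y → Y' → ℝ :=
  fun y y' => ∑ z', R y (y', z')

end CIT

-- appended after cit prelude
noncomputable section
namespace CITex
open Fin CIT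

variable (d : ℕ)

def a : ℝ := ((d:ℝ)+1)⁻¹
def b : ℝ := ((d:ℝ)*((d:ℝ)+1))⁻¹

def P : Fin d × Fin (d+1) × Fin d → ℝ := fun s =>
  if s.2.1 = Fin.castSucc s.1 ∧ s.2.2 = s.1 then a d
  else if s.2.1 = Fin.last d ∧ s.2.2 = s.1 then b d else 0

def R : Fin (d+1) → Fin (d+1) × Fin d → ℝ := fun y' t =>
  if y' = Fin.last d then (if t.1 = Fin.castSucc t.2 then ((d:ℝ))⁻¹ else 0)
  else if t.1 = y' ∧ Fin.castSucc t.2 = y' then 1 - ((d:ℝ))⁻¹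
  else if t.1 = Fin.last d ∧ Fin.castSucc t.2 = y' then ((d:ℝ))⁻¹ else 0

lemma P_eq (x : Fin d) (y : Fin (d+1)) (z : Fin d) :
    P d (x, y, z)
      = if z = x then (if y = Fin.castSucc x then a d else if y = Fin.last d then b d else 0) else 0 := by
  simp only [P]
  by_cases hz : z = x <;> by_cases h1 : y = Fin.castSucc x <;> by_cases h2 : y = Fin.last d <;>
    simp_all

lemma P_eq' (x : Fin d) (y : Fin (d+1)) (z : Fin d) :
    P d (x, y, z)
      = if x = z then (if y = Fin.castSucc z then a d else if y = Fin.last d then b d else 0) else 0 := by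
  rw [P_eq]
  by_cases hz : z = x
  · subst hz; simp
  · have : ¬ (x = z) := fun h => hz h.symm
    simp [hz, this]

lemma a_pos (hd : 0 < d) : 0 < a d := by
  have : (0:ℝ) < (d:ℝ)+1 := by positivity
  exact inv_pos.mpr this

lemma b_pos (hd : 0 < d) : 0 < b d := by
  have h0 : (0:ℝ) < (d:ℝ) := by exact_mod_cast hd
  have : (0:ℝ) < (d:ℝ)*((d:ℝ)+1) := by positivity
  exact inv_pos.mpr this

lemma db_eq_a (hd : 0 < d) : (d:ℝ) * b d = a d := by
  have h0 : (d:ℝ) ≠ 0 := by exact_mod_cast hd.ne'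
  rw [a, b, mul_inv, ← mul_assoc, mul_inv_cancel₀ h0, one_mul]

lemma margXY_eq (x : Fin d) (y : Fin (d+1)) :
    margXY (P d) (x, y)
      = if y = Fin.castSucc x then a d else if y = Fin.last d then b d else 0 := by
  simp only [margXY]
  calc (∑ z, P d (x, y, z))
      = ∑ z, (if z = x then (if y = Fin.castSucc x then a d else if y = Fin.last d then b d else 0) else 0) := by
        exact Finset.sum_congr rfl (fun z _ => P_eq d x y z)
    _ = _ := by simp [Finset.sum_ite_eq']

lemma margYZ_eq (y : Fin (d+1)) (z : Fin d) :
    margYZ (P d) (y, z)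
      = if y = Fin.castSucc z then a d else if y = Fin.last d then b d else 0 := by
  simp only [margYZ]
  calc (∑ x, P d (x, y, z))
      = ∑ x, (if x = z then (if y = Fin.castSucc z then a d else if y = Fin.last d then b d else 0) else 0) := by
        exact Finset.sum_congr rfl (fun x _ => P_eq' d x y z)
    _ = _ := by simp [Finset.sum_ite_eq']

lemma margY_eq (hd : 0 < d) (y : Fin (d+1)) : margY (P d) y = a d := by
  have h : ∀ x : Fin d, (∑ z, P d (x, y, z))
      = if y = Fin.castSucc x then a d else if y = Fin.last d then b d else 0 := by
    intro x
    have := margXY_eq d x y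
    simpa [margXY] using this
  simp only [margY]
  rw [Finset.sum_congr rfl (fun x _ => h x)]
  induction y using Fin.lastCases with
  | last =>
      have hne : ∀ x : Fin d, ¬ (Fin.last d = Fin.castSucc x) := by
        intro x; exact fun hh => (Fin.castSucc_lt_last x).ne hh.symm
      have h3 : ∀ x : Fin d, (if Fin.last d = Fin.castSucc x then a d else if Fin.last d = Fin.last d then b d else 0) = b d := by
        intro x; simp [hne x]
      rw [Finset.sum_congr rfl (fun x _ => h3 x)]
      simp [Finset.sum_const, Finset.card_univ, nsmul_eq_mul, db_eq_a d hd]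
  | cast j =>
      have hne : Fin.castSucc j ≠ Fin.last d := (Fin.castSucc_lt_last j).ne
      have h2 : ∀ x : Fin d, (if Fin.castSucc j = Fin.castSucc x then a d else if Fin.castSucc j = Fin.last d then b d else 0)
          = if x = j then a d else 0 := by
        intro x
        by_cases hx : x = j
        · subst hx; simp
        · have : ¬ (Fin.castSucc j = Fin.castSucc x) := by
            simp [Fin.castSucc_inj]; exact fun hh => hx hh.symm
          simp [this, hne, hx]
      rw [Finset.sum_congr rfl (fun x _ => h2 x)]
      simp [Finset.sum_ite_eq']

lemma P_nonneg (hd : 0 < d) : ∀ s, 0 ≤ P d s := by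
  intro s
  simp only [P]
  split_ifs
  · exact (a_pos d hd).le
  · exact (b_pos d hd).le
  · exact le_rfl

lemma P_support (s : Fin d × Fin (d+1) × Fin d) (hs : P d s ≠ 0) :
    (s.2.1 = Fin.castSucc s.1 ∧ s.2.2 = s.1) ∨ (s.2.1 = Fin.last d ∧ s.2.2 = s.1) := by
  by_contra h
  push_neg at h
  simp only [P] at hs
  rcases Classical.em (s.2.1 = Fin.castSucc s.1 ∧ s.2.2 = s.1) with h1 | h1
  · exact absurd h1 (by intro hh; exact (h.1 hh.1 hh.2).elim)
  · rcases Classical.em (s.2.1 = Fin.last d ∧ s.2.2 = s.1) with h2 | h2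
    · exact absurd h2 (by intro hh; exact (h.2 hh.1 hh.2).elim)
    · rw [if_neg h1, if_neg h2] at hs; exact hs rfl

lemma isDist_P (hd : 0 < d) : IsDist (P d) := by
  constructor
  · exact P_nonneg d hd
  · rw [Fintype.sum_prod_type]
    have h : ∀ x : Fin d, (∑ t : Fin (d+1) × Fin d, P d (x, t)) = a d + b d := by
      intro x
      rw [Fintype.sum_prod_type]
      have h1 : ∀ y : Fin (d+1), (∑ z, P d (x, y, z))
          = (if y = Fin.castSucc x then a d else 0) + (if y = Fin.last d then b d else 0) := by
        intro y
        have h2 := margXY_eq d x y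
        simp only [margXY] at h2
        rw [h2]
        by_cases h1 : y = Fin.castSucc x
        · subst h1; simp [(Fin.castSucc_lt_last x).ne]
        · simp [h1]
      rw [Finset.sum_congr rfl (fun y _ => h1 y)]
      rw [Finset.sum_add_distrib]
      simp [Finset.sum_ite_eq']
    rw [Finset.sum_congr rfl (fun x _ => h x)]
    have h0 : (d:ℝ) ≠ 0 := by exact_mod_cast hd.ne'
    simp only [Finset.sum_const, Finset.card_univ, Fintype.card_fin, nsmul_eq_mul]
    field_simp [a, b]
    rw [mul_add, db_eq_a d hd]; simp only [a]; field_simp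
    try ring

lemma R_cast_eq (j : Fin d) (t : Fin (d+1) × Fin d) :
    R d (Fin.castSucc j) t
      = (if t = (Fin.castSucc j, j) then 1 - ((d:ℝ))⁻¹ else 0)
        + (if t = (Fin.last d, j) then ((d:ℝ))⁻¹ else 0) := by
  obtain ⟨y, z⟩ := t
  simp only [R, if_neg (Fin.castSucc_lt_last j).ne, Prod.mk.injEq]
  by_cases hz : z = j <;> by_cases hy : y = Fin.castSucc j <;> by_cases hl : y = Fin.last d <;>
    simp_all [Fin.castSucc_inj, (Fin.castSucc_lt_last j).ne, (Fin.castSucc_lt_last j).ne']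

lemma R_colsum (hd : 0 < d) (y : Fin (d+1)) (z : Fin d) :
    (∑ y', R d y' (y, z))
      = if y = Fin.castSucc z then 1 else if y = Fin.last d then ((d:ℝ))⁻¹ else 0 := by
  have h0 : (d:ℝ) ≠ 0 := by exact_mod_cast hd.ne'
  rw [Fin.sum_univ_castSucc]
  have h1 : ∀ j : Fin d, R d (Fin.castSucc j) (y, z)
      = (if j = z then (if y = Fin.castSucc z then 1 - ((d:ℝ))⁻¹ else 0) else 0)
        + (if j = z then (if y = Fin.last d then ((d:ℝ))⁻¹ else 0) else 0) := by
    intro j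
    rw [R_cast_eq]
    by_cases hj : j = z
    · subst hj; simp [Prod.mk.injEq]
    · have h2 : ¬ ((y, z) = (Fin.castSucc j, j)) := by
        simp only [Prod.mk.injEq]; intro hh; exact hj hh.2.symm
      have h3 : ¬ ((y, z) = (Fin.last d, j)) := by
        simp only [Prod.mk.injEq]; intro hh; exact hj hh.2.symm
      simp [h2, h3, hj]
  rw [Finset.sum_congr rfl (fun j _ => h1 j)]
  rw [Finset.sum_add_distrib]
  simp only [Finset.sum_ite_eq', Finset.mem_univ, if_true]
  have hRlast : R d (Fin.last d) (y, z) = if y = Fin.castSucc z then ((d:ℝ))⁻¹ else 0 := by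
    simp [R]
  rw [hRlast]
  by_cases hc : y = Fin.castSucc z
  · subst hc
    simp [(Fin.castSucc_lt_last z).ne]
  · simp [hc]

lemma isChannel_R (hd : 0 < d) : IsChannel (R d) := by
  intro y'
  have h0 : (0:ℝ) < (d:ℝ) := by exact_mod_cast hd
  have hinv1 : ((d:ℝ))⁻¹ ≤ 1 := by
    rw [inv_le_one_iff₀]; right; exact_mod_cast hd
  constructor
  · intro w
    simp only [R]
    split_ifs <;> first | positivity | linarith | exact le_rfl
  · induction y' using Fin.lastCases with
    | last =>
        have h1 : ∀ w : Fin (d+1) × Fin d, R d (Fin.last d) w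
            = (if w.1 = Fin.castSucc w.2 then ((d:ℝ))⁻¹ else 0) := by
          intro w; simp [R]
        rw [Finset.sum_congr rfl (fun w _ => h1 w)]
        rw [Fintype.sum_prod_type_right]
        have h2 : ∀ z : Fin d,
            (∑ y : Fin (d+1), if (y, z).1 = Fin.castSucc (y, z).2 then ((d:ℝ))⁻¹ else 0)
            = ((d:ℝ))⁻¹ := by
          intro z; simp [Finset.sum_ite_eq']
        rw [Finset.sum_congr rfl (fun z _ => h2 z)]
        simp only [Finset.sum_const, Finset.card_univ, Fintype.card_fin, nsmul_eq_mul]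
        field_simp
    | cast j =>
        rw [Finset.sum_congr rfl (fun t _ => R_cast_eq d j t)]
        rw [Finset.sum_add_distrib]
        simp only [Finset.sum_ite_eq', Finset.mem_univ, if_true]
        ring

lemma chan_marg (hd : 0 < d) : chanOnDist (R d) (margY (P d)) = margYZ (P d) := by
  funext t
  obtain ⟨y, z⟩ := t
  simp only [chanOnDist]
  rw [Finset.sum_congr rfl (fun y' _ => by rw [margY_eq d hd y'])]
  rw [← Finset.mul_sum]
  rw [R_colsum d hd y z]
  rw [margYZ_eq]
  have h0 : (d:ℝ) ≠ 0 := by exact_mod_cast hd.ne'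
  by_cases hc : y = Fin.castSucc z
  · have : y ≠ Fin.last d := by rw [hc]; exact (Fin.castSucc_lt_last z).ne
    simp [hc, this]
  · by_cases hl : y = Fin.last d
    · subst hl
      rw [if_neg hc, if_neg hc, if_pos rfl, if_pos rfl]
      have h1 : (d:ℝ) + 1 ≠ 0 := by positivity
      field_simp [a, b]
      linarith [db_eq_a d hd]
    · simp [hc, hl]

lemma Q_eq (x : Fin d) (t : Fin (d+1) × Fin d) :
    applyChan (R d) (margXY (P d)) (x, t)
      = a d * R d (Fin.castSucc x) t + b d * R d (Fin.last d) t := by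
  simp only [applyChan]
  have h1 : ∀ y' : Fin (d+1), margXY (P d) ((x, t).1, y') * R d y' t
      = (if y' = Fin.castSucc x then a d * R d (Fin.castSucc x) t else 0)
        + (if y' = Fin.last d then b d * R d (Fin.last d) t else 0) := by
    intro y'
    rw [margXY_eq]
    by_cases h1 : y' = Fin.castSucc x
    · subst h1; simp [(Fin.castSucc_lt_last x).ne]
    · by_cases h2 : y' = Fin.last d
      · subst h2; simp [h1]
      · simp [h1, h2]
  rw [Finset.sum_congr rfl (fun y' _ => h1 y')]
  rw [Finset.sum_add_distrib]
  simp [Finset.sum_ite_eq']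

lemma Q_val1 (x : Fin d) :
    applyChan (R d) (margXY (P d)) (x, (Fin.castSucc x, x))
      = a d * (1 - ((d:ℝ))⁻¹) + b d * ((d:ℝ))⁻¹ := by
  rw [Q_eq]
  have h1 : R d (Fin.castSucc x) (Fin.castSucc x, x) = 1 - ((d:ℝ))⁻¹ := by
    simp [R, (Fin.castSucc_lt_last x).ne]
  have h2 : R d (Fin.last d) (Fin.castSucc x, x) = ((d:ℝ))⁻¹ := by
    simp [R]
  rw [h1, h2]

lemma Q_val2 (x : Fin d) :
    applyChan (R d) (margXY (P d)) (x, (Fin.last d, x))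
      = a d * ((d:ℝ))⁻¹ := by
  rw [Q_eq]
  have h1 : R d (Fin.castSucc x) (Fin.last d, x) = ((d:ℝ))⁻¹ := by
    simp [R, (Fin.castSucc_lt_last x).ne, (Fin.castSucc_lt_last x).ne']
  have h2 : R d (Fin.last d) (Fin.last d, x) = 0 := by
    simp [R, (Fin.castSucc_lt_last x).ne']
  rw [h1, h2]
  ring

lemma P_val1 (x : Fin d) : P d (x, (Fin.castSucc x, x)) = a d := by simp [P]

lemma P_val2 (x : Fin d) : P d (x, (Fin.last d, x)) = b d := by
  simp [P, (Fin.castSucc_lt_last x).ne']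

lemma cmi_P (hd : 0 < d) : cmi (P d) = a d * Real.logb 2 (d:ℝ) := by
  have h0 : (0:ℝ) < (d:ℝ) := by exact_mod_cast hd
  have ha := a_pos d hd
  have hb := b_pos d hd
  have hsummand : ∀ s : Fin d × Fin (d+1) × Fin d,
      P d s * Real.logb 2 (P d s * margY (P d) s.2.1
          / (margXY (P d) (s.1, s.2.1) * margYZ (P d) (s.2.1, s.2.2)))
      = (if s.2.1 = Fin.last d ∧ s.2.2 = s.1 then b d * Real.logb 2 (d:ℝ) else 0) := by
    rintro ⟨x, y, z⟩
    induction y using Fin.lastCases with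
    | last =>
        by_cases hz : z = x
        · subst hz
          have hP : P d (z, Fin.last d, z) = b d := P_val2 d z
          rw [hP, margY_eq d hd, margXY_eq, margYZ_eq,
            if_neg (Fin.castSucc_lt_last z).ne', if_pos rfl, if_pos ⟨rfl, rfl⟩]
          congr 2
          field_simp [a, b]
          linarith [db_eq_a d hd]
        · have hP : P d (x, Fin.last d, z) = 0 := by
            simp [P, hz, (Fin.castSucc_lt_last x).ne']
          simp [hP, hz]
    | cast j =>
        have hlast : ¬ (Fin.castSucc j = Fin.last d ∧ z = x) := by
          simp [(Fin.castSucc_lt_last j).ne]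
        rw [if_neg hlast]
        by_cases h : j = x ∧ z = x
        · obtain ⟨hj, hz⟩ := h
          subst hj; subst hz
          have hP : P d (z, Fin.castSucc z, z) = a d := P_val1 d z
          rw [hP, margY_eq d hd, margXY_eq, margYZ_eq, if_pos rfl]
          have harg : a d * a d / (a d * a d) = 1 := by
            field_simp
          rw [harg, Real.logb_one, mul_zero]
        · have hP : P d (x, Fin.castSucc j, z) = 0 := by
            simp only [P]
            rw [if_neg, if_neg]
            · simp [(Fin.castSucc_lt_last j).ne]
            · intro hh
              exact h ⟨Fin.castSucc_inj.mp hh.1, hh.2⟩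
          simp only [hP, zero_mul]
  simp only [cmi]
  rw [Finset.sum_congr rfl (fun s _ => hsummand s)]
  rw [Fintype.sum_prod_type]
  have hin : ∀ x : Fin d,
      (∑ t : Fin (d+1) × Fin d,
        if (x, t).2.1 = Fin.last d ∧ (x, t).2.2 = (x, t).1 then b d * Real.logb 2 (d:ℝ) else 0)
      = b d * Real.logb 2 (d:ℝ) := by
    intro x
    have hpt : ∀ t : Fin (d+1) × Fin d,
        (if (x, t).2.1 = Fin.last d ∧ (x, t).2.2 = (x, t).1 then b d * Real.logb 2 (d:ℝ) else 0)
        = (if t = (Fin.last d, x) then b d * Real.logb 2 (d:ℝ) else 0) := by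
      intro t
      by_cases h : t = (Fin.last d, x)
      · subst h; simp
      · have h' : ¬ (t.1 = Fin.last d ∧ t.2 = x) := fun hh => h (Prod.ext hh.1 hh.2)
        simp only [h, h', if_false]
    rw [Finset.sum_congr rfl (fun t _ => hpt t)]
    simp [Finset.sum_ite_eq']
  rw [Finset.sum_congr rfl (fun x _ => hin x)]
  simp only [Finset.sum_const, Finset.card_univ, Fintype.card_fin, nsmul_eq_mul]
  rw [← mul_assoc, db_eq_a d hd]

lemma rho_eq (hd : 0 < d) :
    a d / (a d * (1 - ((d:ℝ))⁻¹) + b d * ((d:ℝ))⁻¹)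
      = (d:ℝ)^2 / ((d:ℝ)^2 - (d:ℝ) + 1) := by
  have h0 : (0:ℝ) < (d:ℝ) := by exact_mod_cast hd
  have h1 : (1:ℝ) ≤ (d:ℝ) := by exact_mod_cast hd
  have hD : (0:ℝ) < (d:ℝ)^2 - (d:ℝ) + 1 := by nlinarith
  have h2 : (0:ℝ) < (d:ℝ) + 1 := by linarith
  rw [a, b]
  rw [div_eq_div_iff]
  · field_simp
  · have hb' : (0:ℝ) < ((d:ℝ)*((d:ℝ)+1))⁻¹ * ((d:ℝ))⁻¹ := by positivity
    have ha' : (0:ℝ) ≤ ((d:ℝ)+1)⁻¹ * (1 - ((d:ℝ))⁻¹) := by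
      apply mul_nonneg (by positivity)
      have : ((d:ℝ))⁻¹ ≤ 1 := by rw [inv_le_one_iff₀]; right; exact h1
      linarith
    linarith
  · exact hD.ne'

lemma ratio2_eq (hd : 0 < d) : b d / (a d * ((d:ℝ))⁻¹) = 1 := by
  have h0 : (0:ℝ) < (d:ℝ) := by exact_mod_cast hd
  have h2 : (0:ℝ) < (d:ℝ) + 1 := by linarith
  rw [a, b]
  field_simp

lemma q1_pos (hd : 0 < d) : 0 < a d * (1 - ((d:ℝ))⁻¹) + b d * ((d:ℝ))⁻¹ := by
  have h0 : (0:ℝ) < (d:ℝ) := by exact_mod_cast hd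
  have h1 : (1:ℝ) ≤ (d:ℝ) := by exact_mod_cast hd
  have hb' : (0:ℝ) < b d * ((d:ℝ))⁻¹ := by
    have := b_pos d hd; positivity
  have ha' : (0:ℝ) ≤ a d * (1 - ((d:ℝ))⁻¹) := by
    apply mul_nonneg (a_pos d hd).le
    have : ((d:ℝ))⁻¹ ≤ 1 := by rw [inv_le_one_iff₀]; right; exact h1
    linarith
  linarith

lemma suppLe_PQ (hd : 0 < d) : suppLe (P d) (applyChan (R d) (margXY (P d))) := by
  rintro ⟨x, y, z⟩ hs
  rcases P_support d _ hs with ⟨h1, h2⟩ | ⟨h1, h2⟩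
  · simp only at h1 h2
    subst h2; subst h1
    rw [Q_val1]
    exact (q1_pos d hd).ne'
  · simp only at h1 h2
    subst h2; subst h1
    rw [Q_val2]
    have h0 : (0:ℝ) < (d:ℝ) := by exact_mod_cast hd
    have := a_pos d hd
    positivity

lemma ratio_set (hd : 0 < d) :
    {r : ℝ | ∃ s, P d s ≠ 0 ∧ r = P d s / applyChan (R d) (margXY (P d)) s}
      = {(d:ℝ)^2 / ((d:ℝ)^2 - (d:ℝ) + 1), 1} := by
  have x0 : Fin d := ⟨0, hd⟩
  ext r
  simp only [Set.mem_setOf_eq, Set.mem_insert_iff, Set.mem_singleton_iff]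
  constructor
  · rintro ⟨s, hs, rfl⟩
    obtain ⟨x, y, z⟩ := s
    rcases P_support d _ hs with ⟨h1, h2⟩ | ⟨h1, h2⟩
    · simp only at h1 h2
      subst h2; subst h1
      left
      rw [P_val1, Q_val1, rho_eq d hd]
    · simp only at h1 h2
      subst h2; subst h1
      right
      rw [P_val2, Q_val2, ratio2_eq d hd]
  · rintro (rfl | rfl)
    · refine ⟨(x0, (Fin.castSucc x0, x0)), ?_, ?_⟩
      · rw [P_val1]; exact (a_pos d hd).ne'
      · rw [P_val1, Q_val1, rho_eq d hd]
    · refine ⟨(x0, (Fin.last d, x0)), ?_, ?_⟩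
      · rw [P_val2]; exact (b_pos d hd).ne'
      · rw [P_val2, Q_val2, ratio2_eq d hd]

lemma dMax_P (hd : 0 < d) :
    dMax (P d) (applyChan (R d) (margXY (P d)))
      = ((Real.logb 2 ((d:ℝ)^2 / ((d:ℝ)^2 - (d:ℝ) + 1)) : ℝ) : EReal) := by
  rw [dMax, if_pos (suppLe_PQ d hd), ratio_set d hd]
  have h0 : (0:ℝ) < (d:ℝ) := by exact_mod_cast hd
  have h1 : (1:ℝ) ≤ (d:ℝ) := by exact_mod_cast hd
  have hD : (0:ℝ) < (d:ℝ)^2 - (d:ℝ) + 1 := by nlinarith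
  have hρ1 : (1:ℝ) ≤ (d:ℝ)^2 / ((d:ℝ)^2 - (d:ℝ) + 1) := by
    rw [le_div_iff₀ hD]; nlinarith
  rw [csSup_pair, sup_eq_left.mpr hρ1]

end CITex
end


open CIT in
/-- for every constant `κ` there is a tripartite distribution
`P` and a channel `R` from `Y` to `Y×Z` with `R(P_Y) = P_YZ` such that
`κ · D_max(P ‖ (id⊗R)(P_XY)) < I(X:Z|Y)_P`. -/
theorem large_cmi_good_recovery (κ : ℝ) :
    ∃ (nx ny nz : ℕ) (P : Fin nx × Fin ny × Fin nz → ℝ)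
      (R : Fin ny → Fin ny × Fin nz → ℝ),
      IsDist P ∧ IsChannel R ∧ chanOnDist R (margY P) = margYZ P ∧
        (κ : EReal) * dMax P (applyChan R (margXY P)) < ((cmi P : ℝ) : EReal) := by
  set d : ℕ := ⌈Real.exp (2*|κ|)⌉₊ + 3 with hdef
  have hd : 0 < d := by omega
  have hd3 : (3:ℝ) ≤ (d:ℝ) := by exact_mod_cast (by omega : 3 ≤ d)
  have hdR : Real.exp (2*|κ|) < (d:ℝ) := by
    have h1 : Real.exp (2*|κ|) ≤ (⌈Real.exp (2*|κ|)⌉₊ : ℝ) := Nat.le_ceil _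
    have h2 : ((⌈Real.exp (2*|κ|)⌉₊ : ℕ) : ℝ) + 3 = (d:ℝ) := by
      rw [hdef]; push_cast; ring
    linarith
  have hlog : 2*|κ| < Real.log d := by
    have h1 : Real.log (Real.exp (2*|κ|)) < Real.log d :=
      Real.log_lt_log (Real.exp_pos _) hdR
    rwa [Real.log_exp] at h1
  refine ⟨d, d+1, d, CITex.P d, CITex.R d, CITex.isDist_P d hd, CITex.isChannel_R d hd,
    CITex.chan_marg d hd, ?_⟩
  rw [CITex.dMax_P d hd, CITex.cmi_P d hd, ← EReal.coe_mul, EReal.coe_lt_coe_iff]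
  set u : ℝ := (d:ℝ) with hu
  have h2 : (0:ℝ) < u + 1 := by linarith
  have hD : (0:ℝ) < u^2 - u + 1 := by nlinarith
  set ρ : ℝ := u^2/(u^2 - u + 1) with hρ
  have hρpos : 0 < ρ := by positivity
  have hρ1 : 1 ≤ ρ := by
    rw [hρ, le_div_iff₀ hD]; nlinarith
  have hρub : ρ - 1 ≤ 2/(u+1) := by
    have hρm : ρ - 1 = (u-1)/(u^2 - u + 1) := by
      rw [hρ, eq_div_iff hD.ne', sub_mul, div_mul_cancel₀ _ hD.ne']; ring
    rw [hρm, div_le_div_iff₀ hD h2]; nlinarith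
  have hlogρ : Real.log ρ ≤ 2/(u+1) := by
    have := Real.log_le_sub_one_of_pos hρpos
    linarith
  have hlogρ0 : 0 ≤ Real.log ρ := Real.log_nonneg hρ1
  have hL2 : 0 < Real.log 2 := Real.log_pos (by norm_num)
  have hlogd0 : 0 < Real.log u := Real.log_pos (by linarith)
  have key : κ * Real.log ρ < (u+1)⁻¹ * Real.log u := by
    have hinv : (0:ℝ) < (u+1)⁻¹ := by positivity
    rcases le_or_gt κ 0 with hκ | hκ
    · have h3 : κ * Real.log ρ ≤ 0 := mul_nonpos_of_nonpos_of_nonneg hκ hlogρ0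
      nlinarith
    · have hκabs : |κ| = κ := abs_of_pos hκ
      have h5 : κ * Real.log ρ ≤ κ * (2/(u+1)) := mul_le_mul_of_nonneg_left hlogρ hκ.le
      have h7 : 2*κ < Real.log u := by
        rw [hκabs] at hlog; exact hlog
      have h8 : κ * (2/(u+1)) = 2*κ * (u+1)⁻¹ := by ring
      have h9 : 2*κ * (u+1)⁻¹ < Real.log u * (u+1)⁻¹ :=
        mul_lt_mul_of_pos_right h7 hinv
      calc κ * Real.log ρ ≤ κ * (2/(u+1)) := h5
        _ = 2*κ * (u+1)⁻¹ := h8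
        _ < Real.log u * (u+1)⁻¹ := h9
        _ = (u+1)⁻¹ * Real.log u := by ring
  have goalform : κ * Real.logb 2 ρ < (u+1)⁻¹ * Real.logb 2 u := by
    rw [Real.logb, Real.logb]
    calc κ * (Real.log ρ / Real.log 2) = (κ * Real.log ρ) / Real.log 2 := by ring
      _ < ((u+1)⁻¹ * Real.log u) / Real.log 2 := by gcongr
      _ = (u+1)⁻¹ * (Real.log u / Real.log 2) := by ring
  exact goalform
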